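/- Every forest (acyclic graph) can be edge-decomposed into two star forests, i.e., two spanning subgraphs each of which is a disjoint union of stars. -/

import Mathlib

/-- A star forest: an acyclic graph with no path on 3 edges,
i.e. every component is a star. -/
def IsStarForest {V : Type*} (S : SimpleGraph V) : Prop :=
  S.IsAcyclic ∧ ∀ u v w x : V, S.Adj u v → S.Adj v w → S.Adj w x → u = w ∨ v = x

namespace StarForestAux

open SimpleGraph Walk

variable {V : Type*} {G : SimpleGraph V} {r u v w x : V}

lemma concat_isPath {p : G.Walk u v} (hp : p.IsPath) (hw : w ∉ p.support)
    (h : G.Adj v w) : (p.concat h).IsPath := by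
  rw [← isPath_reverse_iff, reverse_concat, cons_isPath_iff]
  refine ⟨hp.reverse, ?_⟩
  simpa [support_reverse] using hw

/-- In a forest, the distances from a root to two adjacent vertices differ by exactly one. -/
lemma dist_adj (hG : G.IsAcyclic) (hr : G.Reachable r v) (hadj : G.Adj u v) :
    G.dist r u + 1 = G.dist r v ∨ G.dist r v + 1 = G.dist r u := by
  classical
  obtain ⟨pv, hpv, hlv⟩ := hr.exists_path_of_dist
  have hru : G.Reachable r u := hr.trans ⟨hadj.symm.toWalk⟩
  obtain ⟨pu, hpu, hlu⟩ := hru.exists_path_of_dist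
  by_cases hmem : u ∈ pv.support
  · left
    have hdrop : (pv.dropUntil u hmem).IsPath := hpv.dropUntil hmem
    have huniq : (⟨pv.dropUntil u hmem, hdrop⟩ : G.Path u v) = Path.singleton hadj :=
      (isAcyclic_iff_path_unique.mp hG) _ _
    have hlen1 : (pv.dropUntil u hmem).length = 1 := by
      have := congrArg (fun q : G.Path u v => (q : G.Walk u v).length) huniq
      simpa [Path.singleton] using this
    have hsplit : (pv.takeUntil u hmem).length + (pv.dropUntil u hmem).length
        = pv.length := by
      rw [← length_append, take_spec]
    have h1 : G.dist r u ≤ G.dist r v - 1 := by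
      have := dist_le (pv.takeUntil u hmem)
      omega
    have h2 : G.dist r v ≤ G.dist r u + 1 := by
      have := dist_le (pu.concat hadj)
      rw [length_concat] at this
      omega
    have hvpos : 1 ≤ G.dist r v := by omega
    omega
  · right
    have hq : (pv.concat hadj.symm).IsPath := concat_isPath hpv hmem hadj.symm
    have huniq : (⟨pv.concat hadj.symm, hq⟩ : G.Path r u) = ⟨pu, hpu⟩ :=
      (isAcyclic_iff_path_unique.mp hG) _ _
    have := congrArg (fun q : G.Path r u => (q : G.Walk r u).length) huniq
    simp only [length_concat] at this
    omega

/-- In a forest, the parent (neighbour closer to a root) of a vertex is unique. -/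
lemma parent_unique (hG : G.IsAcyclic) (hr : G.Reachable r v)
    (hu : G.Adj u v) (hw : G.Adj w v)
    (hdu : G.dist r u + 1 = G.dist r v) (hdw : G.dist r w + 1 = G.dist r v) :
    u = w := by
  have hru : G.Reachable r u := hr.trans ⟨hu.symm.toWalk⟩
  have hrw : G.Reachable r w := hr.trans ⟨hw.symm.toWalk⟩
  obtain ⟨pu, hpu, hlu⟩ := hru.exists_path_of_dist
  obtain ⟨pw, hpw, hlw⟩ := hrw.exists_path_of_dist
  have hqul : (pu.concat hu).length = G.dist r v := by rw [length_concat]; omega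
  have hqwl : (pw.concat hw).length = G.dist r v := by rw [length_concat]; omega
  have hqu : (pu.concat hu).IsPath := isPath_of_length_eq_dist _ hqul
  have hqw : (pw.concat hw).IsPath := isPath_of_length_eq_dist _ hqwl
  have huniq : (⟨pu.concat hu, hqu⟩ : G.Path r v) = ⟨pw.concat hw, hqw⟩ :=
    (isAcyclic_iff_path_unique.mp hG) _ _
  have heq : pu.concat hu = pw.concat hw := by
    simpa using congrArg (fun q : G.Path r v => (q : G.Walk r v)) huniq
  have h1 : (pu.concat hu).reverse.getVert 1 = u := by
    rw [reverse_concat, getVert_cons_succ, getVert_zero]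
  have h2 : (pw.concat hw).reverse.getVert 1 = w := by
    rw [reverse_concat, getVert_cons_succ, getVert_zero]
  rw [← h1, ← h2, heq]

/-- Canonical root of the component of a vertex. -/
noncomputable def root (G : SimpleGraph V) (v : V) : V :=
  (G.connectedComponentMk v).out

/-- Depth of a vertex: distance to the root of its component. -/
noncomputable def depth (G : SimpleGraph V) (v : V) : ℕ :=
  G.dist (root G v) v

lemma reachable_root (G : SimpleGraph V) (v : V) : G.Reachable (root G v) v :=
  ConnectedComponent.exact (Quot.out_eq _)

lemma root_eq_of_adj (h : G.Adj u v) : root G u = root G v := by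
  unfold root
  rw [ConnectedComponent.sound h.reachable]

lemma depth_eq (h : G.Adj u v) : depth G u = G.dist (root G v) u := by
  rw [depth, root_eq_of_adj h]

/-- Orientation of edges in a parity class. -/
lemma edge_depth (hG : G.IsAcyclic) {b : ℕ} (hadj : G.Adj u v)
    (hmin : min (depth G u) (depth G v) % 2 = b) :
    (depth G v % 2 = b → depth G u = depth G v + 1) ∧
    (depth G v % 2 ≠ b → depth G u + 1 = depth G v) := by
  have hr : G.Reachable (root G v) v := reachable_root G v
  have hdu : depth G u = G.dist (root G v) u := depth_eq hadj
  have hdv : depth G v = G.dist (root G v) v := rfl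
  have h := dist_adj hG hr hadj
  rw [← hdu, ← hdv] at h
  rcases min_choice (depth G u) (depth G v) with hm | hm <;> rw [hm] at hmin <;>
    constructor <;> intro hv <;> omega

/-- The parity-`b` half of `G`. -/
noncomputable def half (G : SimpleGraph V) (b : ℕ) : SimpleGraph V where
  Adj u v := G.Adj u v ∧ min (depth G u) (depth G v) % 2 = b
  symm := ⟨fun u v h => ⟨h.1.symm, by rw [min_comm]; exact h.2⟩⟩
  loopless := ⟨fun v h => G.loopless.irrefl v h.1⟩

lemma half_le (G : SimpleGraph V) (b : ℕ) : half G b ≤ G := fun _ _ h => h.1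

lemma half_acyclic (hG : G.IsAcyclic) (b : ℕ) : (half G b).IsAcyclic := by
  intro v c hc
  exact hG (c.mapLe (half_le G b)) (hc.mapLe _)

lemma parent_unique' (hG : G.IsAcyclic) (hu : G.Adj u v) (hw : G.Adj w v)
    (hdu : depth G u + 1 = depth G v) (hdw : depth G w + 1 = depth G v) :
    u = w := by
  refine parent_unique hG (reachable_root G v) hu hw ?_ ?_
  · rw [← depth_eq hu]; exact hdu
  · rw [← depth_eq hw]; exact hdw

lemma half_starForest (hG : G.IsAcyclic) (b : ℕ) : IsStarForest (half G b) := by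
  refine ⟨half_acyclic hG b, fun u v w x h1 h2 h3 => ?_⟩
  have e1 := edge_depth (b := b) hG h1.1 h1.2
  have e2 := edge_depth (b := b) hG h2.1.symm (by rw [min_comm]; exact h2.2)
  by_cases hv : depth G v % 2 = b
  · -- v is a centre; x must equal v
    right
    have hw1 : depth G w = depth G v + 1 := e2.1 hv
    have hwb : depth G w % 2 ≠ b := by omega
    have e3 := edge_depth (b := b) hG h3.1.symm (by rw [min_comm]; exact h3.2)
    have hx : depth G x + 1 = depth G w := e3.2 hwb
    exact (parent_unique' hG h3.1.symm h2.1 hx (by omega)).symm ▸ rfl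
  · -- u and w are both parents of v
    left
    exact parent_unique' hG h1.1 h2.1.symm (e1.2 hv) (e2.2 hv)

end StarForestAux

open StarForestAux in
/-- Every forest can be edge-decomposed into two star forests. -/
theorem stmt_0 {V : Type*} (G : SimpleGraph V) (hG : G.IsAcyclic) :
    ∃ S₁ S₂ : SimpleGraph V, IsStarForest S₁ ∧ IsStarForest S₂ ∧
      Disjoint S₁.edgeSet S₂.edgeSet ∧ S₁ ⊔ S₂ = G := by
  refine ⟨half G 0, half G 1, half_starForest hG 0, half_starForest hG 1, ?_, ?_⟩
  · rw [Set.disjoint_left]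
    intro e he0 he1
    induction e with
    | _ a b =>
      rw [SimpleGraph.mem_edgeSet] at he0 he1
      have h0 := he0.2
      have h1 := he1.2
      omega
  · ext a c
    simp only [SimpleGraph.sup_adj]
    constructor
    · rintro (h | h) <;> exact h.1
    · intro h
      rcases Nat.mod_two_eq_zero_or_one (min (depth G a) (depth G c)) with hm | hm
      · exact Or.inl ⟨h, hm⟩
      · exact Or.inr ⟨h, hm⟩
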